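/- Let A, B ∈ ℝ^{d×r} satisfy AᵀA = BᵀB = I_r. Then inf_{Q ∈ 𝕆(r)} ‖A − BQ‖_F² ≤ ‖AAᵀ − BBᵀ‖_F², and moreover ‖AAᵀ − BBᵀ‖_F² = 2(r − ‖AᵀB‖_F²). (Equivalently, with the principal angles ∠(A,B) defined via the singular value decomposition AᵀB = U·cos(∠(A,B))·Vᵀ, one has inf_{Q ∈ 𝕆(r)} ‖A − BQ‖_F² ≤ 2‖sin(∠(A,B))‖_F² = ‖AAᵀ − BBᵀ‖_F².) -/

import Mathlib

open Matrix

noncomputable section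

/-- Squared Frobenius norm. -/
def frobSq {m n : ℕ} (A : Matrix (Fin m) (Fin n) ℝ) : ℝ := ∑ i, ∑ j, (A i j) ^ 2

section ProcrustesAux

lemma frobSq_eq_trace {m n : ℕ} (A : Matrix (Fin m) (Fin n) ℝ) :
    frobSq A = Matrix.trace (Aᵀ * A) := by
  simp only [frobSq, Matrix.trace, Matrix.diag, Matrix.mul_apply, Matrix.transpose_apply, sq]
  rw [Finset.sum_comm]

lemma frobSq_nonneg {m n : ℕ} (A : Matrix (Fin m) (Fin n) ℝ) : 0 ≤ frobSq A :=
  Finset.sum_nonneg fun _ _ => Finset.sum_nonneg fun _ _ => sq_nonneg _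

lemma transpose_stdBasisMatrix' {r : ℕ} (i j : Fin r) (c : ℝ) :
    (Matrix.single i j c)ᵀ = Matrix.single j i c := by
  ext a b
  simp [Matrix.single, Matrix.transpose_apply, Matrix.of_apply, and_comm]

lemma trace_stdBasisMatrix_mul {r : ℕ} (i j : Fin r) (S : Matrix (Fin r) (Fin r) ℝ) :
    Matrix.trace (Matrix.single i j (1:ℝ) * S) = S j i := by
  simp [Matrix.trace, Matrix.diag, Matrix.mul_apply, Matrix.single, ite_and]

lemma rot_orth {r : ℕ} (i j : Fin r) (hij : i ≠ j) (c s : ℝ) (h : c ^ 2 + s ^ 2 = 1) :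
    (1 + (c - 1) • (Matrix.single i i (1:ℝ) + Matrix.single j j 1)
       + s • (Matrix.single j i 1 - Matrix.single i j 1))ᵀ *
    (1 + (c - 1) • (Matrix.single i i (1:ℝ) + Matrix.single j j 1)
       + s • (Matrix.single j i 1 - Matrix.single i j 1)) = 1 := by
  have hz1 : ∀ (a b : Fin r) (c d : ℝ), Matrix.single a i c * Matrix.single j b d = 0 :=
    fun a b c d => Matrix.single_mul_single_of_ne (c := c) a i j hij d
  have hz2 : ∀ (a b : Fin r) (c d : ℝ), Matrix.single a j c * Matrix.single i b d = 0 :=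
    fun a b c d => Matrix.single_mul_single_of_ne (c := c) a j i hij.symm d
  simp only [Matrix.transpose_add, Matrix.transpose_smul, Matrix.transpose_one,
    Matrix.transpose_sub, transpose_stdBasisMatrix']
  simp only [Matrix.add_mul, Matrix.mul_add, Matrix.smul_mul, Matrix.mul_smul,
    Matrix.one_mul, Matrix.mul_one, Matrix.sub_mul, Matrix.mul_sub, smul_sub, smul_add,
    Matrix.single_mul_single_same, hz1, hz2, mul_one, smul_smul]
  match_scalars
  any_goals ring1
  all_goals linear_combination h

lemma trace_rot_mul {r : ℕ} (i j : Fin r) (c s : ℝ) (S : Matrix (Fin r) (Fin r) ℝ) :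
    Matrix.trace ((1 + (c - 1) • (Matrix.single i i (1:ℝ) + Matrix.single j j 1)
       + s • (Matrix.single j i 1 - Matrix.single i j 1))ᵀ * S)
    = Matrix.trace S + (c - 1) * (S i i + S j j) + s * (S j i - S i j) := by
  simp only [Matrix.transpose_add, Matrix.transpose_smul, Matrix.transpose_one,
    Matrix.transpose_sub, transpose_stdBasisMatrix', Matrix.add_mul, Matrix.sub_mul,
    Matrix.smul_mul, Matrix.one_mul, Matrix.trace_add, Matrix.trace_smul, Matrix.trace_sub,
    trace_stdBasisMatrix_mul, smul_eq_mul]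
  try ring

lemma outer_mul_outer {r : ℕ} (v : Fin r → ℝ) (hv : v ⬝ᵥ v = 1) :
    vecMulVec v v * vecMulVec v v = vecMulVec v v := by
  ext a b
  simp only [Matrix.mul_apply, vecMulVec_apply]
  calc ∑ k, v a * v k * (v k * v b) = (v a * v b) * ∑ k, v k * v k := by
        rw [Finset.mul_sum]; congr 1; ext k; ring
    _ = v a * v b := by rw [show ∑ k, v k * v k = 1 from hv, mul_one]

lemma outer_symm {r : ℕ} (v : Fin r → ℝ) : (vecMulVec v v)ᵀ = vecMulVec v v := by
  ext a b; simp [vecMulVec_apply, mul_comm]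

lemma refl_orth {r : ℕ} (v : Fin r → ℝ) (hv : v ⬝ᵥ v = 1) :
    (1 - (2:ℝ) • vecMulVec v v)ᵀ * (1 - (2:ℝ) • vecMulVec v v) = 1 := by
  rw [Matrix.transpose_sub, Matrix.transpose_smul, outer_symm, Matrix.transpose_one,
    Matrix.sub_mul, Matrix.mul_sub, Matrix.mul_sub, Matrix.one_mul, Matrix.mul_one]
  simp only [Matrix.smul_mul, Matrix.mul_smul, Matrix.one_mul, smul_smul,
    outer_mul_outer v hv]
  module

lemma trace_outer_mul {r : ℕ} (v : Fin r → ℝ) (S : Matrix (Fin r) (Fin r) ℝ) :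
    Matrix.trace (vecMulVec v v * S) = v ⬝ᵥ (S *ᵥ v) := by
  simp only [Matrix.trace, Matrix.diag, Matrix.mul_apply, vecMulVec_apply,
    dotProduct, Matrix.mulVec, Finset.mul_sum]
  rw [Finset.sum_comm]
  congr 1; ext k; congr 1; ext i; ring

lemma exists_max {r : ℕ} (M : Matrix (Fin r) (Fin r) ℝ) :
    ∃ Q : Matrix (Fin r) (Fin r) ℝ, Qᵀ * Q = 1 ∧
      ∀ R : Matrix (Fin r) (Fin r) ℝ, Rᵀ * R = 1 →
        Matrix.trace (Rᵀ * M) ≤ Matrix.trace (Qᵀ * M) := by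
  classical
  set K : Set (Matrix (Fin r) (Fin r) ℝ) := (fun Q => Qᵀ * Q) ⁻¹' {1} with hK
  have hKmem : ∀ Q, Q ∈ K ↔ Qᵀ * Q = 1 := fun Q => Iff.rfl
  have hentry : ∀ (a b : Fin r), Continuous fun Q : Matrix (Fin r) (Fin r) ℝ => Q a b :=
    fun a b => (continuous_apply b).comp (continuous_apply a)
  have hcont : Continuous fun Q : Matrix (Fin r) (Fin r) ℝ => Qᵀ * Q := by
    apply continuous_pi; intro i; apply continuous_pi; intro j
    simp only [Matrix.mul_apply, Matrix.transpose_apply]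
    exact continuous_finset_sum _ fun k _ => (hentry k i).mul (hentry k j)
  have hKclosed : IsClosed K := isClosed_singleton.preimage hcont
  have hbox : IsCompact (Set.univ.pi fun _ : Fin r =>
      Set.univ.pi fun _ : Fin r => Set.Icc (-1:ℝ) 1) :=
    isCompact_univ_pi fun _ => isCompact_univ_pi fun _ => isCompact_Icc
  have hsub : K ⊆ Set.univ.pi fun _ : Fin r =>
      Set.univ.pi fun _ : Fin r => Set.Icc (-1:ℝ) 1 := by
    intro Q hQ
    have hQ1 : Qᵀ * Q = 1 := hQ
    intro i _
    intro j _
    have h1 : ∑ k, Q k j * Q k j = 1 := by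
      have := congrFun (congrFun hQ1 j) j
      simpa [Matrix.mul_apply, Matrix.transpose_apply, Matrix.one_apply] using this
    have hle : Q i j * Q i j ≤ 1 := by
      rw [← h1]
      exact Finset.single_le_sum (f := fun k => Q k j * Q k j)
        (fun k _ => mul_self_nonneg _) (Finset.mem_univ i)
    constructor <;> nlinarith
  have hKcomp : IsCompact K := hbox.of_isClosed_subset hKclosed hsub
  have hKne : K.Nonempty := ⟨1, by simp [hKmem]⟩
  have hfcont : Continuous fun Q : Matrix (Fin r) (Fin r) ℝ => Matrix.trace (Qᵀ * M) := by
    simp only [Matrix.trace, Matrix.diag, Matrix.mul_apply, Matrix.transpose_apply]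
    exact continuous_finset_sum _ fun i _ =>
      continuous_finset_sum _ fun k _ => (hentry k i).mul continuous_const
  obtain ⟨Q, hQK, hmax⟩ := hKcomp.exists_isMaxOn hKne hfcont.continuousOn
  exact ⟨Q, hQK, fun R hR => hmax hR⟩

lemma sym_of_max {r : ℕ} (S : Matrix (Fin r) (Fin r) ℝ)
    (hS : ∀ R : Matrix (Fin r) (Fin r) ℝ, Rᵀ * R = 1 →
      Matrix.trace (Rᵀ * S) ≤ Matrix.trace S) :
    Sᵀ = S := by
  ext a b
  rw [Matrix.transpose_apply]
  by_cases hab : a = b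
  · rw [hab]
  · set t := S a a + S b b with ht'
    set u := S b a - S a b with hu'
    have key : ∀ c s : ℝ, c ^ 2 + s ^ 2 = 1 → (c - 1) * t + s * u ≤ 0 := by
      intro c s hcs
      have h := hS _ (rot_orth a b hab c s hcs)
      rw [trace_rot_mul a b c s S, ← ht', ← hu'] at h
      linarith
    have hu : u = 0 := by
      by_contra hu0
      have hupos : 0 < u * u := mul_self_pos.mpr hu0
      have hsum : (0:ℝ) < t ^ 2 + u ^ 2 := by nlinarith
      set h0 := Real.sqrt (t ^ 2 + u ^ 2) with hh0
      have hpos : 0 < h0 := Real.sqrt_pos.mpr hsum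
      have hh : h0 ^ 2 = t ^ 2 + u ^ 2 := Real.sq_sqrt hsum.le
      have hcs : (t / h0) ^ 2 + (u / h0) ^ 2 = 1 := by
        field_simp
        linarith [hh]
      have F := key (t / h0) (u / h0) hcs
      have heq : h0 * ((t / h0 - 1) * t + u / h0 * u) = t ^ 2 + u ^ 2 - t * h0 := by
        field_simp
        ring
      have F2 : t ^ 2 + u ^ 2 - t * h0 ≤ 0 := by
        rw [← heq]
        exact mul_nonpos_of_nonneg_of_nonpos hpos.le F
      nlinarith [sq_nonneg (h0 - t)]
    linarith [hu]

lemma psd_of_max {r : ℕ} (S : Matrix (Fin r) (Fin r) ℝ)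
    (hS : ∀ R : Matrix (Fin r) (Fin r) ℝ, Rᵀ * R = 1 →
      Matrix.trace (Rᵀ * S) ≤ Matrix.trace S) :
    ∀ x : Fin r → ℝ, 0 ≤ x ⬝ᵥ (S *ᵥ x) := by
  intro x
  by_cases hx : x = 0
  · simp [hx]
  · have hn2 : 0 < x ⬝ᵥ x := by
      rcases (Finset.sum_nonneg fun i _ => mul_self_nonneg (x i) : 0 ≤ x ⬝ᵥ x).lt_or_eq with h | h
      · exact h
      · exact absurd ((dotProduct_self_eq_zero).mp h.symm) hx
    set c : ℝ := (Real.sqrt (x ⬝ᵥ x))⁻¹ with hc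
    have hs : 0 < Real.sqrt (x ⬝ᵥ x) := Real.sqrt_pos.mpr hn2
    have hsq : Real.sqrt (x ⬝ᵥ x) * Real.sqrt (x ⬝ᵥ x) = x ⬝ᵥ x :=
      Real.mul_self_sqrt hn2.le
    set v : Fin r → ℝ := c • x with hv'
    have hv : v ⬝ᵥ v = 1 := by
      rw [hv', smul_dotProduct, dotProduct_smul, smul_eq_mul, smul_eq_mul, hc]
      field_simp
      exact (Real.sq_sqrt hn2.le).symm
    have hrefl := hS _ (refl_orth v hv)
    have htr : Matrix.trace ((1 - (2:ℝ) • vecMulVec v v)ᵀ * S)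
        = Matrix.trace S - 2 * (v ⬝ᵥ (S *ᵥ v)) := by
      rw [Matrix.transpose_sub, Matrix.transpose_smul, outer_symm, Matrix.transpose_one,
        Matrix.sub_mul, Matrix.one_mul, Matrix.smul_mul, Matrix.trace_sub,
        Matrix.trace_smul, trace_outer_mul, smul_eq_mul]
    rw [htr] at hrefl
    have hvpos : 0 ≤ v ⬝ᵥ (S *ᵥ v) := by linarith
    have hscale : v ⬝ᵥ (S *ᵥ v) = c * (c * (x ⬝ᵥ (S *ᵥ x))) := by
      rw [hv', Matrix.mulVec_smul, smul_dotProduct, dotProduct_smul,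
        smul_eq_mul, smul_eq_mul]
    have hcpos : 0 < c := by rw [hc]; positivity
    nlinarith [hvpos, hscale, hcpos, mul_pos hcpos hcpos]

lemma dp_self_nonneg {r : ℕ} (x : Fin r → ℝ) : 0 ≤ x ⬝ᵥ x :=
  Finset.sum_nonneg fun i _ => mul_self_nonneg (x i)

lemma dp_transpose_mulVec {m n : ℕ} (M : Matrix (Fin m) (Fin n) ℝ)
    (x : Fin n → ℝ) (y : Fin m → ℝ) : x ⬝ᵥ (Mᵀ *ᵥ y) = (M *ᵥ x) ⬝ᵥ y := by
  rw [Matrix.dotProduct_mulVec, Matrix.vecMul_transpose]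

lemma amgm_dp {r : ℕ} (y z : Fin r → ℝ) : y ⬝ᵥ z ≤ (y ⬝ᵥ y + z ⬝ᵥ z) / 2 := by
  have h := dp_self_nonneg (y - z)
  rw [sub_dotProduct, dotProduct_sub, dotProduct_sub,
    dotProduct_comm z y] at h
  linarith

lemma quad_bound {d r : ℕ} (A B : Matrix (Fin d) (Fin r) ℝ)
    (hA : Aᵀ * A = 1) (hB : Bᵀ * B = 1)
    (Q : Matrix (Fin r) (Fin r) ℝ) (hQ : Qᵀ * Q = 1) (x : Fin r → ℝ) :
    x ⬝ᵥ ((Qᵀ * (Bᵀ * A)) *ᵥ x) ≤ x ⬝ᵥ x := by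
  set w := A *ᵥ x with hw
  set y := Q *ᵥ x with hy
  set z := Bᵀ *ᵥ w with hz
  have h1 : (Qᵀ * (Bᵀ * A)) *ᵥ x = Qᵀ *ᵥ z := by
    rw [← Matrix.mulVec_mulVec, ← Matrix.mulVec_mulVec]
  have hyy : y ⬝ᵥ y = x ⬝ᵥ x := by
    rw [hy, ← dp_transpose_mulVec Q x (Q *ᵥ x), Matrix.mulVec_mulVec, hQ,
      Matrix.one_mulVec]
  have hww : w ⬝ᵥ w = x ⬝ᵥ x := by
    rw [hw, ← dp_transpose_mulVec A x (A *ᵥ x), Matrix.mulVec_mulVec, hA,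
      Matrix.one_mulVec]
  have hzz : z ⬝ᵥ z ≤ x ⬝ᵥ x := by
    have hp := dp_self_nonneg (w - (B * Bᵀ) *ᵥ w)
    have hPw : z ⬝ᵥ z = w ⬝ᵥ ((B * Bᵀ) *ᵥ w) := by
      rw [hz, ← dp_transpose_mulVec Bᵀ w (Bᵀ *ᵥ w), Matrix.transpose_transpose,
        Matrix.mulVec_mulVec]
    have hsymP : ((B * Bᵀ) *ᵥ w) ⬝ᵥ w = w ⬝ᵥ ((B * Bᵀ) *ᵥ w) := dotProduct_comm _ _
    have hPP : ((B * Bᵀ) *ᵥ w) ⬝ᵥ ((B * Bᵀ) *ᵥ w) = w ⬝ᵥ ((B * Bᵀ) *ᵥ w) := by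
      have e1 : (B * Bᵀ) *ᵥ ((B * Bᵀ) *ᵥ w) = (B * Bᵀ) *ᵥ w := by
        rw [Matrix.mulVec_mulVec, show B * Bᵀ * (B * Bᵀ) = B * Bᵀ by
          rw [Matrix.mul_assoc, ← Matrix.mul_assoc Bᵀ B Bᵀ, hB, Matrix.one_mul]]
      have e2 : ((B * Bᵀ) *ᵥ w) ⬝ᵥ ((B * Bᵀ) *ᵥ w)
          = w ⬝ᵥ ((B * Bᵀ) *ᵥ ((B * Bᵀ) *ᵥ w)) := by
        rw [← dp_transpose_mulVec (B * Bᵀ) w ((B * Bᵀ) *ᵥ w)]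
        congr 1
        rw [Matrix.transpose_mul, Matrix.transpose_transpose]
      rw [e2, e1]
    rw [sub_dotProduct, dotProduct_sub, dotProduct_sub] at hp
    rw [hPw]
    linarith [hp, hww]
  have h2 : x ⬝ᵥ (Qᵀ *ᵥ z) = y ⬝ᵥ z := dp_transpose_mulVec Q x z
  rw [h1, h2]
  calc y ⬝ᵥ z ≤ (y ⬝ᵥ y + z ⬝ᵥ z) / 2 := amgm_dp y z
    _ ≤ x ⬝ᵥ x := by rw [hyy]; linarith

lemma trace_nonneg_of_posSemidef {r : ℕ} {T : Matrix (Fin r) (Fin r) ℝ}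
    (hT : T.PosSemidef) : 0 ≤ Matrix.trace T := by
  apply Finset.sum_nonneg
  intro i _
  have h := hT.dotProduct_mulVec_nonneg (Pi.single i 1)
  simpa [Matrix.mulVec_single, single_dotProduct] using h

lemma isHermitian_of_symm {r : ℕ} {S : Matrix (Fin r) (Fin r) ℝ} (h : Sᵀ = S) :
    S.IsHermitian := by
  rw [Matrix.IsHermitian, Matrix.conjTranspose]
  simp [Matrix.map]; exact h

lemma trace_sq_le_trace {r : ℕ} {S : Matrix (Fin r) (Fin r) ℝ}
    (hsym : Sᵀ = S)
    (hpos : ∀ x : Fin r → ℝ, 0 ≤ x ⬝ᵥ (S *ᵥ x))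
    (hle : ∀ x : Fin r → ℝ, x ⬝ᵥ (S *ᵥ x) ≤ x ⬝ᵥ x) :
    Matrix.trace (S * S) ≤ Matrix.trace S := by
  have hS : S.PosSemidef := Matrix.PosSemidef.of_dotProduct_mulVec_nonneg (isHermitian_of_symm hsym) fun x => by simpa using hpos x
  have h1S : (1 - S).PosSemidef := by
    refine Matrix.PosSemidef.of_dotProduct_mulVec_nonneg ?_ fun x => ?_
    · exact (Matrix.isHermitian_one).sub (isHermitian_of_symm hsym)
    · have := hle x
      simp only [Matrix.sub_mulVec, Matrix.one_mulVec, dotProduct_sub, star_trivial]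
      linarith
  have hkey : 0 ≤ Matrix.trace (S * (1 - S)) := by
    obtain ⟨Y, hY⟩ : ∃ Y : Matrix (Fin r) (Fin r) ℝ, S = star Y * Y := by
      open scoped MatrixOrder in exact CStarAlgebra.nonneg_iff_eq_star_mul_self.mp hS.nonneg
    have h2 : Matrix.trace (Y * (1 - S) * Yᴴ) =
        Matrix.trace (S * (1 - S)) := by
      rw [Matrix.trace_mul_comm, ← Matrix.mul_assoc, ← Matrix.star_eq_conjTranspose, ← hY]
    rw [← h2]
    apply trace_nonneg_of_posSemidef
    exact h1S.mul_mul_conjTranspose_same Y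
  have hexp : Matrix.trace (S * (1 - S)) = Matrix.trace S - Matrix.trace (S * S) := by
    rw [Matrix.mul_sub, Matrix.mul_one, Matrix.trace_sub]
  linarith [hkey, hexp ▸ hkey]

end ProcrustesAux

/-- **Lemma C.3.**  If `A, B ∈ ℝ^{d×r}` have orthonormal columns (`AᵀA = BᵀB = I_r`), then
`inf_{Q ∈ 𝕆(r)} ‖A − BQ‖_F² ≤ ‖AAᵀ − BBᵀ‖_F²`, and moreover
`‖AAᵀ − BBᵀ‖_F² = 2(r − ‖AᵀB‖_F²)`  (equivalently, with principal angles,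
`inf_Q ‖A − BQ‖_F² ≤ 2‖sin ∠(A,B)‖_F² = ‖AAᵀ − BBᵀ‖_F²`). -/
theorem orthonormal_frame_procrustes_bound
    {d r : ℕ} (A B : Matrix (Fin d) (Fin r) ℝ)
    (hA : Aᵀ * A = 1) (hB : Bᵀ * B = 1) :
    sInf {t : ℝ | ∃ Q : Matrix (Fin r) (Fin r) ℝ, Qᵀ * Q = 1 ∧ t = frobSq (A - B * Q)}
        ≤ frobSq (A * Aᵀ - B * Bᵀ)
    ∧ frobSq (A * Aᵀ - B * Bᵀ) = 2 * ((r : ℝ) - frobSq (Aᵀ * B)) := by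
  classical
  have traceAAt : Matrix.trace (A * Aᵀ) = (r:ℝ) := by
    rw [Matrix.trace_mul_comm, hA, Matrix.trace_one]
    simp
  have traceBBt : Matrix.trace (B * Bᵀ) = (r:ℝ) := by
    rw [Matrix.trace_mul_comm, hB, Matrix.trace_one]
    simp
  have hcross : Matrix.trace (A * Aᵀ * (B * Bᵀ)) = frobSq (Aᵀ * B) := by
    rw [frobSq_eq_trace, Matrix.transpose_mul, Matrix.transpose_transpose]
    rw [show A * Aᵀ * (B * Bᵀ) = A * (Aᵀ * B) * Bᵀ by simp only [Matrix.mul_assoc]]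
    rw [Matrix.trace_mul_cycle]
  have heq : frobSq (A * Aᵀ - B * Bᵀ) = 2 * ((r : ℝ) - frobSq (Aᵀ * B)) := by
    rw [frobSq_eq_trace, Matrix.transpose_sub, Matrix.transpose_mul,
      Matrix.transpose_transpose, Matrix.transpose_mul, Matrix.transpose_transpose,
      Matrix.sub_mul, Matrix.mul_sub, Matrix.mul_sub, Matrix.trace_sub, Matrix.trace_sub,
      Matrix.trace_sub]
    have h1 : Matrix.trace (A * Aᵀ * (A * Aᵀ)) = (r:ℝ) := by
      rw [show A * Aᵀ * (A * Aᵀ) = A * (Aᵀ * A) * Aᵀ by simp only [Matrix.mul_assoc], hA,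
        Matrix.mul_one, traceAAt]
    have h4 : Matrix.trace (B * Bᵀ * (B * Bᵀ)) = (r:ℝ) := by
      rw [show B * Bᵀ * (B * Bᵀ) = B * (Bᵀ * B) * Bᵀ by simp only [Matrix.mul_assoc], hB,
        Matrix.mul_one, traceBBt]
    have h3 : Matrix.trace (B * Bᵀ * (A * Aᵀ)) = frobSq (Aᵀ * B) := by
      rw [Matrix.trace_mul_comm]; exact hcross
    rw [h1, hcross, h3, h4]
    ring
  refine ⟨?_, heq⟩
  rw [heq]
  set M := Bᵀ * A with hM
  obtain ⟨Q, hQ, hmax⟩ := exists_max M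
  set S := Qᵀ * M with hSdef
  have hSmax : ∀ R : Matrix (Fin r) (Fin r) ℝ, Rᵀ * R = 1 →
      Matrix.trace (Rᵀ * S) ≤ Matrix.trace S := by
    intro R hR
    have horth : (Q * R)ᵀ * (Q * R) = 1 := by
      rw [Matrix.transpose_mul, Matrix.mul_assoc, ← Matrix.mul_assoc Qᵀ Q R, hQ,
        Matrix.one_mul, hR]
    have h := hmax (Q * R) horth
    rw [Matrix.transpose_mul, Matrix.mul_assoc, ← hSdef] at h
    rw [hSdef]
    exact h
  have hsym : Sᵀ = S := sym_of_max S hSmax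
  have hpos : ∀ x, 0 ≤ x ⬝ᵥ (S *ᵥ x) := psd_of_max S hSmax
  have hle : ∀ x, x ⬝ᵥ (S *ᵥ x) ≤ x ⬝ᵥ x := by
    intro x
    rw [hSdef, hM]
    exact quad_bound A B hA hB Q hQ x
  have htr : Matrix.trace (S * S) ≤ Matrix.trace S := trace_sq_le_trace hsym hpos hle
  have hQQt : Q * Qᵀ = 1 := mul_eq_one_comm.mp hQ
  have hfr : frobSq (Aᵀ * B) = Matrix.trace (S * S) := by
    rw [frobSq_eq_trace, Matrix.transpose_mul, Matrix.transpose_transpose]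
    have hMS : M = Q * S := by
      rw [hSdef, ← Matrix.mul_assoc, hQQt, Matrix.one_mul]
    have hBAAB : Bᵀ * A * (Aᵀ * B) = M * Mᵀ := by
      rw [hM, Matrix.transpose_mul, Matrix.transpose_transpose]
    rw [hBAAB, hMS, Matrix.transpose_mul, hsym,
      show Q * S * (S * Qᵀ) = Q * (S * S) * Qᵀ by simp only [Matrix.mul_assoc],
      Matrix.trace_mul_cycle, hQ, Matrix.one_mul]
  have hbdd : BddBelow {t : ℝ | ∃ Q' : Matrix (Fin r) (Fin r) ℝ,
      Q'ᵀ * Q' = 1 ∧ t = frobSq (A - B * Q')} := by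
    refine ⟨0, ?_⟩
    rintro t ⟨Q', hQ', rfl⟩
    exact frobSq_nonneg _
  have hmem : frobSq (A - B * Q) ∈ {t : ℝ | ∃ Q' : Matrix (Fin r) (Fin r) ℝ,
      Q'ᵀ * Q' = 1 ∧ t = frobSq (A - B * Q')} := ⟨Q, hQ, rfl⟩
  have hval : frobSq (A - B * Q) = 2 * (r:ℝ) - 2 * Matrix.trace S := by
    rw [frobSq_eq_trace, Matrix.transpose_sub]
    simp only [Matrix.sub_mul, Matrix.mul_sub, Matrix.trace_sub]
    have e1 : Matrix.trace (Aᵀ * A) = (r:ℝ) := by rw [hA, Matrix.trace_one]; simp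
    have e2 : Matrix.trace ((B * Q)ᵀ * (B * Q)) = (r:ℝ) := by
      rw [Matrix.transpose_mul,
        show Qᵀ * Bᵀ * (B * Q) = Qᵀ * (Bᵀ * B) * Q by simp only [Matrix.mul_assoc], hB,
        Matrix.mul_one, hQ, Matrix.trace_one]
      simp
    have e4 : Matrix.trace ((B * Q)ᵀ * A) = Matrix.trace S := by
      rw [Matrix.transpose_mul, hSdef, hM, Matrix.mul_assoc]
    have e3 : Matrix.trace (Aᵀ * (B * Q)) = Matrix.trace S := by
      rw [← Matrix.trace_transpose (Aᵀ * (B * Q)), Matrix.transpose_mul,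
        Matrix.transpose_transpose]
      exact e4
    rw [e1, e2, e3, e4]
    ring
  calc sInf {t : ℝ | ∃ Q' : Matrix (Fin r) (Fin r) ℝ,
      Q'ᵀ * Q' = 1 ∧ t = frobSq (A - B * Q')} ≤ frobSq (A - B * Q) := csInf_le hbdd hmem
    _ = 2 * (r:ℝ) - 2 * Matrix.trace S := hval
    _ ≤ 2 * (r:ℝ) - 2 * Matrix.trace (S * S) := by linarith
    _ = 2 * ((r : ℝ) - frobSq (Aᵀ * B)) := by rw [hfr]; ring
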